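/- McCullagh's formula: for any partition π of {1,...,i}, the generalized cumulant satisfies κ_π = Σ_{ρ∈Π_i : ρ∨π = 1̂} Π_{C∈ρ} κ((X_j)_{j∈C}), where ρ∨π is the join in the partition lattice and 1̂ is the one-block partition. -/

import Mathlib

open Finset
open scoped Classical

namespace McC

variable {β : Type*} [DecidableEq β] {u : Finset β} (P : Finpartition u)

/-- Disjoint subcollections of parts have disjoint unions. -/
lemma disjoint_sup {A A' : Finset (Finset β)} (hA : A ⊆ P.parts) (hA' : A' ⊆ P.parts)
    (h : Disjoint A A') : Disjoint (A.sup id) (A'.sup id) := by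
  rw [Finset.disjoint_sup_left]
  intro B hB
  rw [Finset.disjoint_sup_right]
  intro B' hB'
  exact P.disjoint (hA hB) (hA' hB') (fun e => (Finset.disjoint_left.1 h) hB (e ▸ hB'))

lemma sup_nonempty {A : Finset (Finset β)} (hA : A ⊆ P.parts) (hne : A.Nonempty) :
    (A.sup id).Nonempty := by
  obtain ⟨B, hB⟩ := hne
  obtain ⟨b, hb⟩ := P.nonempty_of_mem_parts (hA hB)
  exact ⟨b, Finset.mem_sup.2 ⟨B, hB, hb⟩⟩

lemma mem_of_subset_sup {B : Finset β} {A : Finset (Finset β)} (hB : B ∈ P.parts)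
    (hA : A ⊆ P.parts) (hsub : B ⊆ A.sup id) : B ∈ A := by
  obtain ⟨b, hb⟩ := P.nonempty_of_mem_parts hB
  obtain ⟨B', hB', hb'⟩ := Finset.mem_sup.1 (hsub hb)
  rwa [P.eq_of_mem_parts hB (hA hB') hb hb']

/-- Glue a partition of the parts into a partition of the ground set. -/
def glue (τ : Finpartition P.parts) : Finpartition u where
  parts := τ.parts.image (fun A => A.sup id)
  supIndep := by
    rw [Finset.supIndep_iff_pairwiseDisjoint]
    intro x hx y hy hxy
    simp only [coe_image, Set.mem_image, mem_coe] at hx hy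
    obtain ⟨A, hA, rfl⟩ := hx
    obtain ⟨A', hA', rfl⟩ := hy
    exact disjoint_sup P (τ.le hA) (τ.le hA')
      (τ.disjoint hA hA' (fun e => hxy (by rw [e])))
  sup_parts := by
    rw [Finset.sup_image]
    have : τ.parts.sup (id ∘ fun A => A.sup id) = (τ.parts.biUnion id).sup id := by
      rw [Finset.sup_biUnion]; rfl
    rw [this, ← Finset.sup_eq_biUnion, τ.sup_parts, P.sup_parts]
  bot_notMem := by
    simp only [bot_eq_empty, mem_image, not_exists]
    rintro A ⟨hA, h⟩
    obtain ⟨b, hb⟩ := sup_nonempty P (τ.le hA) (τ.nonempty_of_mem_parts hA)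
    simp [h] at hb


@[simp] lemma glue_parts (τ : Finpartition P.parts) :
    (glue P τ).parts = τ.parts.image (fun A => A.sup id) := rfl

lemma glue_card (τ : Finpartition P.parts) : (glue P τ).parts.card = τ.parts.card := by
  rw [glue_parts, Finset.card_image_of_injOn]
  intro A hA A' hA' h
  by_contra hne
  obtain ⟨b, hb⟩ := sup_nonempty P (τ.le hA) (τ.nonempty_of_mem_parts hA)
  have h' : A.sup id = A'.sup id := h
  simpa using (disjoint_sup P (τ.le hA) (τ.le hA')
    (τ.disjoint hA hA' hne)).le_bot (Finset.mem_inter.2 ⟨hb, h' ▸ hb⟩)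

lemma le_glue (τ : Finpartition P.parts) : P ≤ glue P τ := by
  intro B hB
  obtain ⟨A, hA, hBA⟩ := τ.exists_mem hB
  exact ⟨A.sup id, Finset.mem_image_of_mem _ hA, Finset.le_sup (f := id) hBA⟩

/-- Split a coarsening of `P` into a partition of `P.parts`. -/
def split (σ : Finpartition u) (h : P ≤ σ) : Finpartition P.parts where
  parts := σ.parts.image (fun T => P.parts.filter (· ⊆ T))
  supIndep := by
    rw [Finset.supIndep_iff_pairwiseDisjoint]
    intro x hx y hy hxy
    simp only [coe_image, Set.mem_image, mem_coe] at hx hy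
    obtain ⟨T, hT, rfl⟩ := hx
    obtain ⟨T', hT', rfl⟩ := hy
    simp only [Function.onFun, id_eq]
    rw [Finset.disjoint_left]
    intro B hB hB'
    simp only [id, Finset.mem_filter] at hB hB'
    obtain ⟨b, hb⟩ := P.nonempty_of_mem_parts hB.1
    have : T = T' := σ.eq_of_mem_parts hT hT' (hB.2 hb) (hB'.2 hb)
    exact hxy (by rw [this])
  sup_parts := by
    apply Finset.Subset.antisymm
    · intro A hA
      obtain ⟨X, hX, hAX⟩ := Finset.mem_sup.1 hA
      simp only [mem_image] at hX
      obtain ⟨T, _, rfl⟩ := hX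
      exact Finset.filter_subset _ _ hAX
    · intro B hB
      obtain ⟨T, hT, hBT⟩ := h hB
      refine Finset.mem_sup.2 ⟨P.parts.filter (· ⊆ T), Finset.mem_image_of_mem _ hT, ?_⟩
      simp only [id, Finset.mem_filter]
      exact ⟨hB, hBT⟩
  bot_notMem := by
    simp only [bot_eq_empty, mem_image, not_exists]
    rintro T ⟨hT, hemp⟩
    obtain ⟨b, hb⟩ := σ.nonempty_of_mem_parts hT
    obtain ⟨B, hB, hbB⟩ := P.exists_mem (σ.le hT hb)
    obtain ⟨T', hT', hBT'⟩ := h hB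
    have : T' = T := σ.eq_of_mem_parts hT' hT (hBT' hbB) hb
    have : B ∈ P.parts.filter (· ⊆ T) := Finset.mem_filter.2 ⟨hB, this ▸ hBT'⟩
    simp [hemp] at this

@[simp] lemma split_parts (σ : Finpartition u) (h : P ≤ σ) :
    (split P σ h).parts = σ.parts.image (fun T => P.parts.filter (· ⊆ T)) := rfl

lemma glue_split (σ : Finpartition u) (h : P ≤ σ) : glue P (split P σ h) = σ := by
  ext1
  rw [glue_parts, split_parts, Finset.image_image]
  apply Finset.Subset.antisymm
  · intro x hx
    simp only [mem_image, Function.comp] at hx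
    obtain ⟨T, hT, rfl⟩ := hx
    convert hT using 1
    apply Finset.Subset.antisymm
    · intro b hb
      obtain ⟨B, hB, hbB⟩ := Finset.mem_sup.1 hb
      exact (Finset.mem_filter.1 hB).2 hbB
    · intro b hb
      obtain ⟨B, hB, hbB⟩ := P.exists_mem (σ.le hT hb)
      obtain ⟨T', hT', hBT'⟩ := h hB
      have : T' = T := σ.eq_of_mem_parts hT' hT (hBT' hbB) hb
      exact Finset.mem_sup.2 ⟨B, Finset.mem_filter.2 ⟨hB, this ▸ hBT'⟩, hbB⟩
  · intro T hT
    refine Finset.mem_image.2 ⟨T, hT, ?_⟩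
    simp only [Function.comp]
    apply Finset.Subset.antisymm
    · intro b hb
      obtain ⟨B, hB, hbB⟩ := Finset.mem_sup.1 hb
      exact (Finset.mem_filter.1 hB).2 hbB
    · intro b hb
      obtain ⟨B, hB, hbB⟩ := P.exists_mem (σ.le hT hb)
      obtain ⟨T', hT', hBT'⟩ := h hB
      have : T' = T := σ.eq_of_mem_parts hT' hT (hBT' hbB) hb
      exact Finset.mem_sup.2 ⟨B, Finset.mem_filter.2 ⟨hB, this ▸ hBT'⟩, hbB⟩

lemma split_glue (τ : Finpartition P.parts) : split P (glue P τ) (le_glue P τ) = τ := by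
  ext1
  rw [split_parts, glue_parts, Finset.image_image]
  apply Finset.Subset.antisymm
  · intro x hx
    simp only [mem_image, Function.comp] at hx
    obtain ⟨A, hA, rfl⟩ := hx
    convert hA using 1
    apply Finset.Subset.antisymm
    · intro B hB
      rw [Finset.mem_filter] at hB
      exact mem_of_subset_sup P hB.1 (τ.le hA) hB.2
    · intro B hB
      exact Finset.mem_filter.2 ⟨τ.le hA hB, Finset.le_sup (f := id) hB⟩
  · intro A hA
    refine Finset.mem_image.2 ⟨A, hA, ?_⟩
    simp only [Function.comp]
    apply Finset.Subset.antisymm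
    · intro B hB
      rw [Finset.mem_filter] at hB
      exact mem_of_subset_sup P hB.1 (τ.le hA) hB.2
    · intro B hB
      exact Finset.mem_filter.2 ⟨τ.le hA hB, Finset.le_sup (f := id) hB⟩

lemma glue_mono {τ υ : Finpartition P.parts} (h : τ ≤ υ) : glue P τ ≤ glue P υ := by
  intro x hx
  rw [glue_parts, Finset.mem_image] at hx
  obtain ⟨A, hA, rfl⟩ := hx
  obtain ⟨A', hA', hAA'⟩ := h hA
  exact ⟨A'.sup id, Finset.mem_image_of_mem _ hA', Finset.sup_mono hAA'⟩

lemma glue_le_glue_iff {τ υ : Finpartition P.parts} : glue P τ ≤ glue P υ ↔ τ ≤ υ := by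
  refine ⟨fun h A hA => ?_, glue_mono P⟩
  obtain ⟨T, hT, hsub⟩ := h (Finset.mem_image_of_mem _ hA)
  rw [glue_parts, Finset.mem_image] at hT
  obtain ⟨A', hA', rfl⟩ := hT
  refine ⟨A', hA', fun B hB => ?_⟩
  exact mem_of_subset_sup P (τ.le hA hB) (υ.le hA')
    ((Finset.le_sup (f := id) hB).trans hsub)



variable {β : Type*} [DecidableEq β]

variable {R : Type*} [CommRing R]

/-- unified "add `a` to block `B` (or as a singleton if `B = ∅`)" construction -/
def addTo {t : Finset β} {a : β} (ha : a ∉ t) (υ' : Finpartition t) (B : Finset β)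
    (hB : B = ∅ ∨ B ∈ υ'.parts) : Finpartition (insert a t) where
  parts := insert (insert a B) (υ'.parts.erase B)
  supIndep := by
    have hBt : B ⊆ t := by
      rcases hB with rfl | hB
      · simp
      · exact υ'.le hB
    rw [Finset.supIndep_iff_pairwiseDisjoint]
    intro x hx y hy hxy
    simp only [coe_insert, Set.mem_insert_iff, mem_coe, Finset.mem_erase] at hx hy
    simp only [Function.onFun, id_eq]
    rcases hx with rfl | ⟨hxB, hx⟩
    · rcases hy with rfl | ⟨hyB, hy⟩
      · exact absurd rfl hxy
      · rw [Finset.disjoint_insert_left]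
        constructor
        · exact fun h => ha (υ'.le hy h)
        · rcases hB with rfl | hB
          · simp
          · exact υ'.disjoint hB hy (fun e => hyB e.symm)
    · rcases hy with rfl | ⟨hyB, hy⟩
      · rw [Finset.disjoint_insert_right]
        constructor
        · exact fun h => ha (υ'.le hx h)
        · rcases hB with rfl | hB
          · simp
          · exact (υ'.disjoint hB hx (fun e => hxB e.symm)).symm
      · exact υ'.disjoint hx hy hxy
  sup_parts := by
    rw [Finset.sup_insert]
    have h1 : (υ'.parts.erase B).sup id ⊆ t := by
      intro b hb
      obtain ⟨C, hC, hbC⟩ := Finset.mem_sup.1 hb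
      exact υ'.le (Finset.mem_of_mem_erase hC) hbC
    have h2 : B ∪ (υ'.parts.erase B).sup id = t := by
      rcases hB with rfl | hB
      · rw [Finset.erase_eq_of_notMem (by simpa using υ'.bot_notMem), Finset.empty_union]
        exact υ'.sup_parts
      · apply Finset.Subset.antisymm
        · exact Finset.union_subset (υ'.le hB) h1
        · intro b hb
          rw [← υ'.sup_parts] at hb
          obtain ⟨C, hC, hbC⟩ := Finset.mem_sup.1 hb
          by_cases hCB : C = B
          · exact Finset.mem_union_left _ (hCB ▸ hbC)
          · exact Finset.mem_union_right _
              (Finset.mem_sup.2 ⟨C, Finset.mem_erase.2 ⟨hCB, hC⟩, hbC⟩)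
    calc insert a B ⊔ (υ'.parts.erase B).sup id
        = insert a (B ∪ (υ'.parts.erase B).sup id) := by
          rw [Finset.sup_eq_union, Finset.insert_union]
      _ = insert a t := by rw [h2]
  bot_notMem := by
    simp only [bot_eq_empty, Finset.mem_insert, not_or, Finset.mem_erase]
    refine ⟨fun h => by simpa using congrArg (a ∈ ·) h, fun h => ?_⟩
    exact (by simpa using υ'.bot_notMem : (∅ : Finset β) ∉ υ'.parts) h.2

@[simp] lemma addTo_parts {t : Finset β} {a : β} (ha : a ∉ t) (υ' : Finpartition t)
    (B : Finset β) (hB : B = ∅ ∨ B ∈ υ'.parts) :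
    (addTo ha υ' B hB).parts = insert (insert a B) (υ'.parts.erase B) := rfl


lemma insert_sdiff_singleton {t : Finset β} {a : β} (ha : a ∉ t) :
    insert a t \ {a} = t := by
  ext b
  simp only [Finset.mem_sdiff, Finset.mem_insert, Finset.mem_singleton]
  constructor
  · rintro ⟨rfl | hb, hne⟩
    · exact absurd rfl hne
    · exact hb
  · intro hb
    exact ⟨Or.inr hb, fun e => ha (e ▸ hb)⟩

/-- restrict a partition of `insert a t` to `t` by deleting `a`. -/
def restrict {t : Finset β} {a : β} (ha : a ∉ t) (υ : Finpartition (insert a t)) :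
    Finpartition t :=
  (υ.avoid {a}).copy (insert_sdiff_singleton ha)

lemma mem_restrict {t : Finset β} {a : β} (ha : a ∉ t) (υ : Finpartition (insert a t))
    {C : Finset β} :
    C ∈ (restrict ha υ).parts ↔ ∃ d ∈ υ.parts, ¬d ⊆ {a} ∧ d.erase a = C := by
  rw [restrict, Finpartition.copy_parts, Finpartition.mem_avoid]
  simp_rw [Finset.sdiff_singleton_eq_erase]

lemma part_mem' {t : Finset β} {a : β} (υ : Finpartition (insert a t)) :
    υ.part a ∈ υ.parts := υ.part_mem.2 (Finset.mem_insert_self a t)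

lemma mem_part' {t : Finset β} {a : β} (υ : Finpartition (insert a t)) :
    a ∈ υ.part a := υ.mem_part (Finset.mem_insert_self a t)

lemma restrict_mem_cond {t : Finset β} {a : β} (ha : a ∉ t) (υ : Finpartition (insert a t)) :
    (υ.part a).erase a = ∅ ∨ (υ.part a).erase a ∈ (restrict ha υ).parts := by
  by_cases h : (υ.part a).erase a = ∅
  · exact Or.inl h
  · refine Or.inr ((mem_restrict ha υ).2 ⟨υ.part a, part_mem' υ, ?_, rfl⟩)
    intro hsub
    obtain ⟨b, hb⟩ := Finset.nonempty_of_ne_empty h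
    have := hsub (Finset.mem_of_mem_erase hb)
    simp only [Finset.mem_singleton] at this
    exact (Finset.mem_erase.1 hb).1 this

lemma addTo_restrict {t : Finset β} {a : β} (ha : a ∉ t) (υ : Finpartition (insert a t)) :
    addTo ha (restrict ha υ) ((υ.part a).erase a) (restrict_mem_cond ha υ) = υ := by
  ext1
  rw [addTo_parts]
  have hins : insert a ((υ.part a).erase a) = υ.part a :=
    Finset.insert_erase (mem_part' υ)
  rw [hins]
  apply Finset.Subset.antisymm
  · intro C hC
    rcases Finset.mem_insert.1 hC with rfl | hC
    · exact part_mem' υ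
    · obtain ⟨hCne, hC⟩ := Finset.mem_erase.1 hC
      obtain ⟨d, hd, hdsub, rfl⟩ := (mem_restrict ha υ).1 hC
      have hda : a ∉ d := by
        intro hda
        have : d = υ.part a := υ.part_eq_of_mem hd hda |>.symm
        exact hCne (by rw [this])
      rwa [Finset.erase_eq_of_notMem hda]
  · intro d hd
    by_cases hda : a ∈ d
    · have : d = υ.part a := (υ.part_eq_of_mem hd hda).symm
      exact this ▸ Finset.mem_insert_self _ _
    · refine Finset.mem_insert.2 (Or.inr (Finset.mem_erase.2 ⟨?_, ?_⟩))
      · intro e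
        have hdsub : d ⊆ υ.part a := by
          rw [e]; exact Finset.erase_subset _ _
        have hne : d.Nonempty := υ.nonempty_of_mem_parts hd
        have : d = υ.part a := υ.disjoint.elim hd (part_mem' υ)
          (Finset.not_disjoint_iff.2 ⟨hne.choose, hne.choose_spec, hdsub hne.choose_spec⟩)
        rw [this] at e
        have := Finset.mem_erase.1 (e ▸ mem_part' υ)
        exact this.1 rfl
      · refine (mem_restrict ha υ).2 ⟨d, hd, ?_, Finset.erase_eq_of_notMem hda⟩
        intro hsub
        obtain ⟨b, hb⟩ := υ.nonempty_of_mem_parts hd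
        have := hsub hb
        simp only [Finset.mem_singleton] at this
        exact hda (this ▸ hb)

lemma restrict_addTo {t : Finset β} {a : β} (ha : a ∉ t) (υ' : Finpartition t)
    (B : Finset β) (hB : B = ∅ ∨ B ∈ υ'.parts) :
    restrict ha (addTo ha υ' B hB) = υ' := by
  have haB : a ∉ B := by
    rcases hB with rfl | hB
    · simp
    · exact fun h => ha (υ'.le hB h)
  ext1
  apply Finset.Subset.antisymm
  · intro C hC
    obtain ⟨d, hd, hdsub, rfl⟩ := (mem_restrict ha _).1 hC
    rw [addTo_parts, Finset.mem_insert] at hd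
    rcases hd with rfl | hd
    · rw [Finset.erase_insert haB]
      rcases hB with rfl | hB
      · exact absurd (by simp) hdsub
      · exact hB
    · have hd' := Finset.mem_of_mem_erase hd
      have : a ∉ d := fun h => ha (υ'.le hd' h)
      rwa [Finset.erase_eq_of_notMem this]
  · intro C hC
    by_cases hCB : C = B
    · subst hCB
      refine (mem_restrict ha _).2 ⟨insert a C, Finset.mem_insert_self _ _, ?_, ?_⟩
      · intro hsub
        obtain ⟨b, hb⟩ := υ'.nonempty_of_mem_parts hC
        have := hsub (Finset.mem_insert_of_mem hb)
        simp only [Finset.mem_singleton] at this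
        exact (ha (this ▸ (υ'.le hC hb) : a ∈ t)).elim
      · rw [Finset.erase_insert haB]
    · refine (mem_restrict ha _).2 ⟨C, ?_, ?_, ?_⟩
      · rw [addTo_parts]
        exact Finset.mem_insert_of_mem (Finset.mem_erase.2 ⟨hCB, hC⟩)
      · intro hsub
        obtain ⟨b, hb⟩ := υ'.nonempty_of_mem_parts hC
        have := hsub hb
        simp only [Finset.mem_singleton] at this
        exact ha (this ▸ (υ'.le hC hb))
      · exact Finset.erase_eq_of_notMem (fun h => ha (υ'.le hC h))

lemma addTo_part_a {t : Finset β} {a : β} (ha : a ∉ t) (υ' : Finpartition t)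
    (B : Finset β) (hB : B = ∅ ∨ B ∈ υ'.parts) :
    (addTo ha υ' B hB).part a = insert a B :=
  (addTo ha υ' B hB).part_eq_of_mem
    (by rw [addTo_parts]; exact Finset.mem_insert_self _ _)
    (Finset.mem_insert_self a B)

lemma addTo_card {t : Finset β} {a : β} (ha : a ∉ t) (υ' : Finpartition t)
    (B : Finset β) (hB : B = ∅ ∨ B ∈ υ'.parts) :
    (addTo ha υ' B hB).parts.card =
      if B = ∅ then υ'.parts.card + 1 else υ'.parts.card := by
  rw [addTo_parts, Finset.card_insert_of_notMem]
  · rcases hB with rfl | hB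
    · rw [if_pos rfl, Finset.erase_eq_of_notMem (by simpa using υ'.bot_notMem)]
    · have hBne : B ≠ ∅ := fun e => (by simpa using υ'.bot_notMem : (∅ : Finset β) ∉ υ'.parts) (e ▸ hB)
      rw [if_neg hBne, Finset.card_erase_of_mem hB]
      have : 1 ≤ υ'.parts.card := Finset.card_pos.2 ⟨B, hB⟩
      omega
  · intro h
    have := Finset.mem_of_mem_erase h
    have haB : a ∈ insert a B := Finset.mem_insert_self a B
    exact ha (υ'.le this haB)


lemma sum_falling (x : R) (s : Finset β) :
    ∑ υ : Finpartition s, ∏ j ∈ Finset.range υ.parts.card, (x - (j : R)) = x ^ s.card := by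
  classical
  induction s using Finset.induction_on with
  | empty =>
    have hsub : ∀ υ : Finpartition (∅ : Finset β), υ.parts = ∅ := fun υ =>
      Finpartition.parts_eq_empty_iff.2 rfl
    haveI : Subsingleton (Finpartition (∅ : Finset β)) :=
      ⟨fun u v => by ext1; rw [hsub u, hsub v]⟩
    rw [Fintype.sum_subsingleton _ (⊥ : Finpartition (∅ : Finset β))]
    simp [hsub]
  | @insert a t ha ih =>
    calc ∑ υ : Finpartition (insert a t), ∏ j ∈ Finset.range υ.parts.card, (x - (j : R))
        = ∑ p ∈ (Finset.univ : Finset (Finpartition t)).sigma (fun υ' => insert ∅ υ'.parts),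
            ∏ j ∈ Finset.range (if p.2 = ∅ then p.1.parts.card + 1 else p.1.parts.card),
              (x - (j : R)) := by
          refine Finset.sum_bij' (fun υ _ => (⟨restrict ha υ, (υ.part a).erase a⟩ :
              Σ _ : Finpartition t, Finset β))
            (fun p hp => addTo ha p.1 p.2 (by
              have := (Finset.mem_sigma.1 hp).2
              rcases Finset.mem_insert.1 this with h | h
              · exact Or.inl h
              · exact Or.inr h)) ?_ ?_ ?_ ?_ ?_
          · intro υ _
            rw [Finset.mem_sigma]
            refine ⟨Finset.mem_univ _, ?_⟩
            dsimp only
            rcases restrict_mem_cond ha υ with h | h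
            · rw [h]; exact Finset.mem_insert_self _ _
            · exact Finset.mem_insert_of_mem h
          · intro p hp
            exact Finset.mem_univ _
          · intro υ _
            exact addTo_restrict ha υ
          · intro p hp
            obtain ⟨υ', B⟩ := p
            have haB : a ∉ B := by
              have hm := (Finset.mem_sigma.1 hp).2
              dsimp only at hm
              rcases Finset.mem_insert.1 hm with h | h
              · rw [h]; exact Finset.notMem_empty a
              · exact fun hc => ha (υ'.le h hc)
            dsimp only
            have h2 : ((addTo ha υ' B (by
                have := (Finset.mem_sigma.1 hp).2
                rcases Finset.mem_insert.1 this with h | h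
                · exact Or.inl h
                · exact Or.inr h)).part a).erase a = B := by
              rw [addTo_part_a, Finset.erase_insert haB]
            exact Sigma.ext (restrict_addTo ha υ' B _) (heq_of_eq h2)
          · intro υ _
            conv_lhs => rw [← addTo_restrict ha υ]
            rw [addTo_card]
        _ = ∑ υ' : Finpartition t, (x * ∏ j ∈ Finset.range υ'.parts.card, (x - (j : R))) := by
          rw [Finset.sum_sigma]
          refine Finset.sum_congr rfl fun υ' _ => ?_
          rw [Finset.sum_insert (by simpa using υ'.bot_notMem)]
          rw [if_pos rfl]
          have hrest : ∀ B ∈ υ'.parts,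
              (∏ j ∈ Finset.range (if B = ∅ then υ'.parts.card + 1 else υ'.parts.card),
                (x - (j : R))) = ∏ j ∈ Finset.range υ'.parts.card, (x - (j : R)) := by
            intro B hB
            have hBne : B ≠ ∅ := fun e =>
              (by simpa using υ'.bot_notMem : (∅ : Finset β) ∉ υ'.parts) (e ▸ hB)
            rw [if_neg hBne]
          rw [Finset.sum_congr rfl hrest, Finset.sum_const, Finset.prod_range_succ,
            nsmul_eq_mul]
          ring
        _ = x * x ^ t.card := by rw [← Finset.mul_sum, ih]
        _ = x ^ (insert a t).card := by
          rw [Finset.card_insert_of_notMem ha, pow_succ]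
          ring


lemma coeff_one_falling (m : ℕ) :
    (∏ j ∈ Finset.range (m + 1), (Polynomial.X - (j : Polynomial R))).coeff 1 =
      (Nat.factorial m : R) * (-1 : R) ^ m := by
  rw [Finset.prod_range_succ']
  rw [Nat.cast_zero, sub_zero]
  rw [show (1 : ℕ) = 0 + 1 from rfl, Polynomial.coeff_mul_X]
  rw [Polynomial.coeff_zero_eq_eval_zero, Polynomial.eval_prod]
  have h1 : ∀ j ∈ Finset.range m,
      (Polynomial.X - ((j + 1 : ℕ) : Polynomial R)).eval 0 = (-1 : R) * ((j : R) + 1) := by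
    intro j _
    simp only [Polynomial.eval_sub, Polynomial.eval_X, Polynomial.eval_natCast]
    push_cast
    ring
  rw [Finset.prod_congr rfl h1, Finset.prod_mul_distrib, Finset.prod_const]
  have h2 : ∏ j ∈ Finset.range m, ((j : R) + 1) = (Nat.factorial m : R) := by
    rw [← Finset.prod_range_add_one_eq_factorial m, Nat.cast_prod]
    push_cast
    rfl
  rw [h2, Finset.card_range]
  ring

lemma sum_moebius (T : Finset β) (hT : T.Nonempty) :
    ∑ υ : Finpartition T,
        (Nat.factorial (υ.parts.card - 1) : R) * (-1 : R) ^ (υ.parts.card - 1) =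
      if T.card = 1 then (1 : R) else 0 := by
  have h := congrArg (fun p => Polynomial.coeff p 1)
    (sum_falling (R := Polynomial R) Polynomial.X T)
  rw [Polynomial.finset_sum_coeff, Polynomial.coeff_X_pow] at h
  have key : ∀ υ : Finpartition T,
      (∏ j ∈ Finset.range υ.parts.card, (Polynomial.X - (j : Polynomial R))).coeff 1 =
      (Nat.factorial (υ.parts.card - 1) : R) * (-1 : R) ^ (υ.parts.card - 1) := by
    intro υ
    have hpos : υ.parts.Nonempty := υ.parts_nonempty (by simpa using hT.ne_empty)
    obtain ⟨m, hm⟩ : ∃ m, υ.parts.card = m + 1 :=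
      ⟨υ.parts.card - 1, by have := Finset.card_pos.2 hpos; omega⟩
    rw [hm, coeff_one_falling]
    simp
  rw [Finset.sum_congr rfl (fun υ _ => key υ)] at h
  rw [h]
  by_cases h1 : T.card = 1
  · simp [h1]
  · simp [h1, Ne.symm h1]



lemma sup_id_injOn {u : Finset β} (P : Finpartition u) (τ : Finpartition P.parts) :
    ∀ A ∈ τ.parts, ∀ A' ∈ τ.parts, A.sup id = A'.sup id → A = A' := by
  intro A hA A' hA' h
  by_contra hne
  obtain ⟨b, hb⟩ := sup_nonempty P (τ.le hA) (τ.nonempty_of_mem_parts hA)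
  simpa using (disjoint_sup P (τ.le hA) (τ.le hA')
    (τ.disjoint hA hA' hne)).le_bot (Finset.mem_inter.2 ⟨hb, h ▸ hb⟩)

/-- Restrict a partition to a union of its parts. -/
def restrictTo {u : Finset β} (ρ : Finpartition u) (T : Finset β)
    (hcov : ∀ b ∈ T, b ∈ u ∧ ρ.part b ⊆ T) : Finpartition T :=
  Finpartition.ofSubset ρ (parts := ρ.parts.filter (· ⊆ T)) (Finset.filter_subset _ _)
    (by
      apply Finset.Subset.antisymm
      · intro b hb
        obtain ⟨C, hC, hbC⟩ := Finset.mem_sup.1 hb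
        exact (Finset.mem_filter.1 hC).2 hbC
      · intro b hb
        obtain ⟨hbu, hpart⟩ := hcov b hb
        exact Finset.mem_sup.2 ⟨ρ.part b, Finset.mem_filter.2 ⟨ρ.part_mem.2 hbu, hpart⟩,
          ρ.mem_part hbu⟩)

@[simp] lemma restrictTo_parts {u : Finset β} (ρ : Finpartition u) (T : Finset β)
    (hcov : ∀ b ∈ T, b ∈ u ∧ ρ.part b ⊆ T) :
    (restrictTo ρ T hcov).parts = ρ.parts.filter (· ⊆ T) := rfl

lemma bind_le {u : Finset β} (σ : Finpartition u) (Q : ∀ T ∈ σ.parts, Finpartition T) :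
    σ.bind Q ≤ σ := by
  intro C hC
  obtain ⟨T, hT, hCT⟩ := Finpartition.mem_bind.1 hC
  exact ⟨T, hT, (Q T hT).le hCT⟩

lemma prod_bind {R : Type*} [CommRing R] {u : Finset β} (σ : Finpartition u)
    (Q : ∀ T ∈ σ.parts, Finpartition T) (f : Finset β → R) :
    ∏ C ∈ (σ.bind Q).parts, f C = ∏ T ∈ σ.parts.attach, ∏ D ∈ (Q T.1 T.2).parts, f D := by
  change ∏ C ∈ σ.parts.attach.biUnion (fun T => (Q T.1 T.2).parts), f C = _
  refine Finset.prod_biUnion ?_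
  intro x hx y hy hxy
  simp only [Function.onFun]
  rw [Finset.disjoint_left]
  intro D hDx hDy
  obtain ⟨b, hb⟩ := (Q x.1 x.2).nonempty_of_mem_parts hDx
  have hxb : b ∈ x.1 := (Q x.1 x.2).le hDx hb
  have hyb : b ∈ y.1 := (Q y.1 y.2).le hDy hb
  exact hxy (Subtype.ext (σ.eq_of_mem_parts x.2 y.2 hxb hyb))

lemma restrictTo_bind {u : Finset β} (σ : Finpartition u) (Q : ∀ T ∈ σ.parts, Finpartition T)
    (T : Finset β) (hT : T ∈ σ.parts) (hcov : ∀ b ∈ T, b ∈ u ∧ (σ.bind Q).part b ⊆ T) :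
    restrictTo (σ.bind Q) T hcov = Q T hT := by
  ext1
  rw [restrictTo_parts]
  ext D
  rw [Finset.mem_filter, Finpartition.mem_bind]
  constructor
  · rintro ⟨⟨T', hT', hD⟩, hDT⟩
    obtain ⟨b, hb⟩ := (Q T' hT').nonempty_of_mem_parts hD
    have hTT : T' = T := σ.eq_of_mem_parts hT' hT ((Q T' hT').le hD hb) (hDT hb)
    subst hTT
    exact hD
  · intro hD
    exact ⟨⟨T, hT, hD⟩, (Q T hT).le hD⟩

lemma bind_restrictTo {u : Finset β} (σ ρ : Finpartition u) (hle : ρ ≤ σ)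
    (hc : ∀ T, T ∈ σ.parts → ∀ b ∈ T, b ∈ u ∧ ρ.part b ⊆ T) :
    σ.bind (fun T hT => restrictTo ρ T (hc T hT)) = ρ := by
  ext1
  ext C
  rw [Finpartition.mem_bind]
  constructor
  · rintro ⟨T, hT, hC⟩
    exact (Finset.mem_filter.1 hC).1
  · intro hC
    obtain ⟨T, hT, hCT⟩ := hle hC
    exact ⟨T, hT, Finset.mem_filter.2 ⟨hC, hCT⟩⟩

/-- covering property used for `restrictTo` -/
lemma cov_of_le {u : Finset β} {σ ρ : Finpartition u} (hle : ρ ≤ σ) {T : Finset β}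
    (hT : T ∈ σ.parts) : ∀ b ∈ T, b ∈ u ∧ ρ.part b ⊆ T := by
  intro b hb
  have hbu : b ∈ u := σ.le hT hb
  refine ⟨hbu, ?_⟩
  obtain ⟨T', hT', hsub⟩ := hle (ρ.part_mem.2 hbu)
  have : T' = T := σ.eq_of_mem_parts hT' hT (hsub (ρ.mem_part hbu)) hb
  exact this ▸ hsub

section Join

variable {γ : Type*} [Fintype γ] [DecidableEq γ]

/-- the join relation of two finpartitions of `univ` -/
def jrel (ρ P : Finpartition (Finset.univ : Finset γ)) (a b : γ) : Prop :=
  (∃ B ∈ ρ.parts, a ∈ B ∧ b ∈ B) ∨ ∃ B ∈ P.parts, a ∈ B ∧ b ∈ B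

/-- the join of two finpartitions of `univ`, via the generated equivalence relation. -/
noncomputable def joinFP (ρ P : Finpartition (Finset.univ : Finset γ)) :
    Finpartition (Finset.univ : Finset γ) :=
  @Finpartition.ofSetoid γ _ _ (Relation.EqvGen.setoid (jrel ρ P)) (Classical.decRel _)

lemma mem_part_joinFP (ρ P : Finpartition (Finset.univ : Finset γ)) (a b : γ) :
    b ∈ (joinFP ρ P).part a ↔ Relation.EqvGen (jrel ρ P) a b := by
  rw [joinFP]
  exact Finpartition.mem_part_ofSetoid_iff_rel (s := Relation.EqvGen.setoid (jrel ρ P))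

lemma le_joinFP_left (ρ P : Finpartition (Finset.univ : Finset γ)) : ρ ≤ joinFP ρ P := by
  intro B hB
  obtain ⟨b0, hb0⟩ := ρ.nonempty_of_mem_parts hB
  refine ⟨(joinFP ρ P).part b0, (joinFP ρ P).part_mem.2 (Finset.mem_univ _), fun b hb => ?_⟩
  exact (mem_part_joinFP ρ P b0 b).2 (Relation.EqvGen.rel _ _ (Or.inl ⟨B, hB, hb0, hb⟩))

lemma le_joinFP_right (ρ P : Finpartition (Finset.univ : Finset γ)) : P ≤ joinFP ρ P := by
  intro B hB
  obtain ⟨b0, hb0⟩ := P.nonempty_of_mem_parts hB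
  refine ⟨(joinFP ρ P).part b0, (joinFP ρ P).part_mem.2 (Finset.mem_univ _), fun b hb => ?_⟩
  exact (mem_part_joinFP ρ P b0 b).2 (Relation.EqvGen.rel _ _ (Or.inr ⟨B, hB, hb0, hb⟩))

lemma joinFP_le {ρ P σ : Finpartition (Finset.univ : Finset γ)} (hρ : ρ ≤ σ) (hP : P ≤ σ) :
    joinFP ρ P ≤ σ := by
  have hpart : ∀ a b : γ, Relation.EqvGen (jrel ρ P) a b → σ.part a = σ.part b := by
    intro a b h
    induction h with
    | rel x y hxy =>
      rcases hxy with ⟨B, hB, hx, hy⟩ | ⟨B, hB, hx, hy⟩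
      · obtain ⟨T, hT, hBT⟩ := hρ hB
        rw [σ.part_eq_of_mem hT (hBT hx), σ.part_eq_of_mem hT (hBT hy)]
      · obtain ⟨T, hT, hBT⟩ := hP hB
        rw [σ.part_eq_of_mem hT (hBT hx), σ.part_eq_of_mem hT (hBT hy)]
    | refl x => rfl
    | symm x y _ ih => exact ih.symm
    | trans x y z _ _ ih1 ih2 => exact ih1.trans ih2
  intro T hT
  obtain ⟨x, hx⟩ := (joinFP ρ P).nonempty_of_mem_parts hT
  refine ⟨σ.part x, σ.part_mem.2 (Finset.mem_univ _), fun b hb => ?_⟩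
  have hTx : T = (joinFP ρ P).part x := ((joinFP ρ P).part_eq_of_mem hT hx).symm
  have : Relation.EqvGen (jrel ρ P) x b := (mem_part_joinFP ρ P x b).1 (hTx ▸ hb)
  rw [hpart x b this]
  exact σ.mem_part (Finset.mem_univ _)

lemma le_iff_joinFP {ρ P σ : Finpartition (Finset.univ : Finset γ)} :
    joinFP ρ P ≤ σ ↔ (P ≤ σ ∧ ρ ≤ σ) :=
  ⟨fun h => ⟨le_trans (le_joinFP_right ρ P) h, le_trans (le_joinFP_left ρ P) h⟩,
   fun h => joinFP_le h.2 h.1⟩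

lemma joinFP_card_eq_one_iff [Nonempty γ] (ρ P : Finpartition (Finset.univ : Finset γ)) :
    (joinFP ρ P).parts.card = 1 ↔ ∀ x y : γ, Relation.EqvGen (jrel ρ P) x y := by
  constructor
  · intro h x y
    obtain ⟨T, hT⟩ := Finset.card_eq_one.1 h
    have hx : x ∈ T := by
      have : x ∈ (joinFP ρ P).parts.sup id := by rw [(joinFP ρ P).sup_parts]; exact Finset.mem_univ _
      obtain ⟨B, hB, hxB⟩ := Finset.mem_sup.1 this
      rwa [← Finset.mem_singleton.1 (hT ▸ hB : B ∈ ({T} : Finset (Finset γ)))]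
    have hy : y ∈ T := by
      have : y ∈ (joinFP ρ P).parts.sup id := by rw [(joinFP ρ P).sup_parts]; exact Finset.mem_univ _
      obtain ⟨B, hB, hyB⟩ := Finset.mem_sup.1 this
      rwa [← Finset.mem_singleton.1 (hT ▸ hB : B ∈ ({T} : Finset (Finset γ)))]
    have hTm : T ∈ (joinFP ρ P).parts := by rw [hT]; exact Finset.mem_singleton_self _
    have : T = (joinFP ρ P).part x := ((joinFP ρ P).part_eq_of_mem hTm hx).symm
    exact (mem_part_joinFP ρ P x y).1 (this ▸ hy)
  · intro h
    rw [Finset.card_eq_one]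
    obtain ⟨x⟩ := ‹Nonempty γ›
    refine ⟨(joinFP ρ P).part x, ?_⟩
    apply Finset.eq_singleton_iff_unique_mem.2
    refine ⟨(joinFP ρ P).part_mem.2 (Finset.mem_univ _), fun T hT => ?_⟩
    obtain ⟨y, hy⟩ := (joinFP ρ P).nonempty_of_mem_parts hT
    have h1 : T = (joinFP ρ P).part y := ((joinFP ρ P).part_eq_of_mem hT hy).symm
    have h2 : y ∈ (joinFP ρ P).part x := (mem_part_joinFP ρ P x y).2 (h x y)
    rw [h1, (joinFP ρ P).part_eq_of_mem ((joinFP ρ P).part_mem.2 (Finset.mem_univ x)) h2]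

/-- Lemma B: the Möbius-type sum over all coarsenings of both `P` and `ρ`. -/
lemma sum_w_coarsenings {R : Type*} [CommRing R] [Nonempty γ]
    (ρ P : Finpartition (Finset.univ : Finset γ)) :
    ∑ σ ∈ (Finset.univ : Finset (Finpartition (Finset.univ : Finset γ))).filter
        (fun σ => P ≤ σ ∧ ρ ≤ σ),
      ((Nat.factorial (σ.parts.card - 1) : R) * (-1 : R) ^ (σ.parts.card - 1)) =
      if (∀ x y : γ, Relation.EqvGen (jrel ρ P) x y) then 1 else 0 := by
  have hfilter : (Finset.univ : Finset (Finpartition (Finset.univ : Finset γ))).filter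
      (fun σ => P ≤ σ ∧ ρ ≤ σ) =
      (Finset.univ : Finset (Finpartition (Finset.univ : Finset γ))).filter
      (fun σ => joinFP ρ P ≤ σ) := by
    apply Finset.filter_congr
    intro σ _
    rw [le_iff_joinFP]
  rw [hfilter]
  have hbij : ∑ σ ∈ (Finset.univ : Finset (Finpartition (Finset.univ : Finset γ))).filter
      (fun σ => joinFP ρ P ≤ σ),
      ((Nat.factorial (σ.parts.card - 1) : R) * (-1 : R) ^ (σ.parts.card - 1)) =
      ∑ υ : Finpartition (joinFP ρ P).parts,
      ((Nat.factorial (υ.parts.card - 1) : R) * (-1 : R) ^ (υ.parts.card - 1)) := by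
    refine Finset.sum_bij' (fun σ hσ => split (joinFP ρ P) σ (Finset.mem_filter.1 hσ).2)
      (fun υ _ => glue (joinFP ρ P) υ) ?_ ?_ ?_ ?_ ?_
    · intro σ hσ
      exact Finset.mem_univ _
    · intro υ _
      exact Finset.mem_filter.2 ⟨Finset.mem_univ _, le_glue _ υ⟩
    · intro σ hσ
      exact glue_split _ σ _
    · intro υ _
      exact split_glue _ υ
    · intro σ hσ
      have h2 := glue_card (joinFP ρ P) (split (joinFP ρ P) σ (Finset.mem_filter.1 hσ).2)
      rw [glue_split] at h2
      rw [← h2]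
  have hne : (joinFP ρ P).parts.Nonempty := by
    have : (Finset.univ : Finset γ).Nonempty := Finset.univ_nonempty
    exact (joinFP ρ P).parts_nonempty (by simpa using this.ne_empty)
  rw [hbij, sum_moebius _ hne]
  by_cases hj : ∀ x y : γ, Relation.EqvGen (jrel ρ P) x y
  · rw [if_pos ((joinFP_card_eq_one_iff ρ P).2 hj), if_pos hj]
  · rw [if_neg (fun h => hj ((joinFP_card_eq_one_iff ρ P).1 h)), if_neg hj]

end Join

end McC

/-- The generalized cumulant `κ_π` of McCullagh: for a partition
`π = {B_1,…,B_m}` of `{1,…,i}` this is the joint cumulant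
`κ(Π_{j∈B_1} X_j, …, Π_{j∈B_m} X_j)`, expressed via the Möbius partition
formula over partitions `τ` of the set of blocks of `π`; the moment of a
product of blocks `A ⊆ π.parts` is `m (⋃ A)`. -/
noncomputable def genCumulant {R : Type*} [CommRing R] {i : ℕ}
    (m : Finset (Fin i) → R) (π : Finpartition (Finset.univ : Finset (Fin i))) : R :=
  ∑ τ : Finpartition π.parts,
    (Nat.factorial (τ.parts.card - 1) : R) * (-1 : R) ^ (τ.parts.card - 1) *
      ∏ A ∈ τ.parts, m (A.sup id)

/-- `ρ ∨ π = 1̂` in the partition lattice: the equivalence relation generated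
by "lying in a common block of `ρ` or of `π`" identifies all points. -/
def JoinEqTop {i : ℕ} (ρ π : Finpartition (Finset.univ : Finset (Fin i))) : Prop :=
  ∀ x y : Fin i,
    Relation.EqvGen
      (fun a b => (∃ B ∈ ρ.parts, a ∈ B ∧ b ∈ B) ∨ ∃ B ∈ π.parts, a ∈ B ∧ b ∈ B) x y

/-- McCullagh's formula: `κ_π = Σ_{ρ : ρ∨π = 1̂} Π_{C∈ρ} κ((X_j)_{j∈C})`, where
`κ` is the joint-cumulant functional determined by the moment–cumulant relation. -/
theorem mcCullagh_formula {R : Type*} [CommRing R]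
    (i : ℕ) (m κ : Finset (Fin i) → R)
    (hmc : ∀ C : Finset (Fin i), C.Nonempty →
      m C = ∑ σ : Finpartition C, ∏ D ∈ σ.parts, κ D)
    (π : Finpartition (Finset.univ : Finset (Fin i))) :
    genCumulant m π =
      ∑ ρ ∈ (Finset.univ : Finset (Finpartition (Finset.univ : Finset (Fin i)))).filter
          (fun ρ => JoinEqTop ρ π),
        ∏ C ∈ ρ.parts, κ C := by
  classical
  rcases Nat.eq_zero_or_pos i with hi | hi
  · subst hi
    have hparts : π.parts = ∅ := Finpartition.parts_eq_empty_iff.2 (by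
      rw [Finset.univ_eq_empty]; rfl)
    have hL : genCumulant m π = 1 := by
      rw [genCumulant]
      have hsub : ∀ τ : Finpartition π.parts, τ.parts = ∅ := fun τ =>
        Finpartition.parts_eq_empty_iff.2 (by rw [hparts]; rfl)
      haveI : Subsingleton (Finpartition π.parts) :=
        ⟨fun a b => by ext1; rw [hsub a, hsub b]⟩
      rw [Fintype.sum_subsingleton _ (⊥ : Finpartition π.parts)]
      rw [hsub ⊥]
      simp [Nat.factorial]
    have hR : ∑ ρ ∈ (Finset.univ : Finset (Finpartition (Finset.univ : Finset (Fin 0)))).filter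
          (fun ρ => JoinEqTop ρ π), ∏ C ∈ ρ.parts, κ C = 1 := by
      have hfil : (Finset.univ : Finset (Finpartition (Finset.univ : Finset (Fin 0)))).filter
          (fun ρ => JoinEqTop ρ π) = Finset.univ :=
        Finset.filter_true_of_mem (fun ρ _ => fun x y => x.elim0)
      rw [hfil]
      have hsub : ∀ ρ : Finpartition (Finset.univ : Finset (Fin 0)), ρ.parts = ∅ := fun ρ =>
        Finpartition.parts_eq_empty_iff.2 (by rw [Finset.univ_eq_empty]; rfl)
      haveI : Subsingleton (Finpartition (Finset.univ : Finset (Fin 0))) :=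
        ⟨fun a b => by ext1; rw [hsub a, hsub b]⟩
      rw [Fintype.sum_subsingleton _ (⊥ : Finpartition (Finset.univ : Finset (Fin 0)))]
      rw [hsub ⊥]
      simp
    rw [hL, hR]
  · haveI : Nonempty (Fin i) := ⟨⟨0, hi⟩⟩
    have stepA : genCumulant m π =
        ∑ σ ∈ Finset.univ.filter
            (fun σ : Finpartition (Finset.univ : Finset (Fin i)) => π ≤ σ),
          (Nat.factorial (σ.parts.card - 1) : R) * (-1 : R) ^ (σ.parts.card - 1) *
            ∏ T ∈ σ.parts, m T := by
      rw [genCumulant]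
      refine Finset.sum_bij' (fun τ _ => McC.glue π τ)
        (fun σ hσ => McC.split π σ (Finset.mem_filter.1 hσ).2) ?_ ?_ ?_ ?_ ?_
      · intro τ _
        exact Finset.mem_filter.2 ⟨Finset.mem_univ _, McC.le_glue π τ⟩
      · intro σ _
        exact Finset.mem_univ _
      · intro τ _
        exact McC.split_glue π τ
      · intro σ hσ
        exact McC.glue_split π σ _
      · intro τ _
        rw [McC.glue_card]
        congr 1
        rw [McC.glue_parts, Finset.prod_image (McC.sup_id_injOn π τ)]
    have stepB : ∀ σ : Finpartition (Finset.univ : Finset (Fin i)),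
        (∏ T ∈ σ.parts, m T) =
        ∑ p ∈ σ.parts.pi (fun T => (Finset.univ : Finset (Finpartition T))),
          ∏ T ∈ σ.parts.attach, ∏ D ∈ (p T.1 T.2).parts, κ D := by
      intro σ
      rw [Finset.prod_congr rfl (fun T hT => hmc T (σ.nonempty_of_mem_parts hT))]
      exact Finset.prod_sum σ.parts (fun T => (Finset.univ : Finset (Finpartition T)))
        (fun (T : Finset (Fin i)) (σT : Finpartition T) => ∏ D ∈ σT.parts, κ D)
    have stepC : genCumulant m π =
        ∑ x ∈ (Finset.univ.filter
            (fun σ : Finpartition (Finset.univ : Finset (Fin i)) => π ≤ σ)).sigma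
            (fun σ => σ.parts.pi (fun T => (Finset.univ : Finset (Finpartition T)))),
          (Nat.factorial (x.1.parts.card - 1) : R) * (-1 : R) ^ (x.1.parts.card - 1) *
            ∏ T ∈ x.1.parts.attach, ∏ D ∈ (x.2 T.1 T.2).parts, κ D := by
      rw [stepA, Finset.sum_sigma]
      refine Finset.sum_congr rfl fun σ _ => ?_
      rw [stepB σ, Finset.mul_sum]
    have stepD : genCumulant m π =
        ∑ x ∈ (Finset.univ : Finset (Finpartition (Finset.univ : Finset (Fin i)))).sigma
            (fun ρ => Finset.univ.filter
              (fun σ : Finpartition (Finset.univ : Finset (Fin i)) => π ≤ σ ∧ ρ ≤ σ)),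
          (Nat.factorial (x.2.parts.card - 1) : R) * (-1 : R) ^ (x.2.parts.card - 1) *
            ∏ C ∈ x.1.parts, κ C := by
      rw [stepC]
      refine Finset.sum_bij'
        (fun x hx => (⟨x.1.bind x.2, x.1⟩ :
          Σ _ : Finpartition (Finset.univ : Finset (Fin i)),
            Finpartition (Finset.univ : Finset (Fin i))))
        (fun x hx =>
          (⟨x.2, fun T hT => McC.restrictTo x.1 T
            (McC.cov_of_le (Finset.mem_filter.1 (Finset.mem_sigma.1 hx).2).2.2 hT)⟩ :
            Σ σ : Finpartition (Finset.univ : Finset (Fin i)),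
              (∀ T ∈ σ.parts, Finpartition T)))
        ?_ ?_ ?_ ?_ ?_
      · intro x hx
        rw [Finset.mem_sigma]
        refine ⟨Finset.mem_univ _, Finset.mem_filter.2 ⟨Finset.mem_univ _, ?_, ?_⟩⟩
        · exact (Finset.mem_filter.1 (Finset.mem_sigma.1 hx).1).2
        · exact McC.bind_le x.1 x.2
      · intro x hx
        rw [Finset.mem_sigma]
        refine ⟨?_, ?_⟩
        · exact Finset.mem_filter.2 ⟨Finset.mem_univ _,
            (Finset.mem_filter.1 (Finset.mem_sigma.1 hx).2).2.1⟩
        · exact Finset.mem_pi.2 fun T hT => Finset.mem_univ _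
      · intro x hx
        obtain ⟨σ, p⟩ := x
        dsimp only
        refine Sigma.ext rfl (heq_of_eq ?_)
        funext T hT
        exact McC.restrictTo_bind σ p T hT (McC.cov_of_le (McC.bind_le σ p) hT)
      · intro x hx
        obtain ⟨ρ, σ⟩ := x
        dsimp only
        have hle : ρ ≤ σ := (Finset.mem_filter.1 (Finset.mem_sigma.1 hx).2).2.2
        refine Sigma.ext ?_ (heq_of_eq rfl)
        exact McC.bind_restrictTo σ ρ hle _
      · intro x hx
        obtain ⟨σ, p⟩ := x
        dsimp only
        congr 1
        exact (McC.prod_bind σ p κ).symm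
    rw [stepD, Finset.sum_sigma]
    have stepE : ∀ ρ : Finpartition (Finset.univ : Finset (Fin i)),
        ∑ σ ∈ Finset.univ.filter
            (fun σ : Finpartition (Finset.univ : Finset (Fin i)) => π ≤ σ ∧ ρ ≤ σ),
          (Nat.factorial (σ.parts.card - 1) : R) * (-1 : R) ^ (σ.parts.card - 1) *
            ∏ C ∈ ρ.parts, κ C =
        (if JoinEqTop ρ π then (1 : R) else 0) * ∏ C ∈ ρ.parts, κ C := by
      intro ρ
      rw [← Finset.sum_mul, McC.sum_w_coarsenings ρ π]
      congr 1
      by_cases hj : JoinEqTop ρ π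
      · rw [if_pos hj]
        exact if_pos (show ∀ x y : Fin i, Relation.EqvGen (McC.jrel ρ π) x y from hj)
      · rw [if_neg hj]
        exact if_neg (show ¬ ∀ x y : Fin i, Relation.EqvGen (McC.jrel ρ π) x y from hj)
    rw [Finset.sum_congr rfl (fun ρ _ => stepE ρ)]
    rw [Finset.sum_congr rfl (fun ρ _ => by rw [ite_mul, one_mul, zero_mul] :
      ∀ ρ ∈ (Finset.univ : Finset (Finpartition (Finset.univ : Finset (Fin i)))),
        (if JoinEqTop ρ π then (1 : R) else 0) * ∏ C ∈ ρ.parts, κ C =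
        if JoinEqTop ρ π then ∏ C ∈ ρ.parts, κ C else 0)]
    rw [← Finset.sum_filter]
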